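/- Iterated carré du champ formula: for sequences f, g : ℤ → ℝ and coefficients α, β : ℤ → ℝ, the operator Γ₂^h(f,g)_i := (1/2)(L_h Γ^h(f,g)_i - Γ^h(f, L_h g)_i - Γ^h(L_h f, g)_i) equals (1/4) α_i (3Δ⁺β_i - Δ⁺α_i) Δ⁺f_i Δ⁺g_i + (1/4) β_i (Δ⁻β_i - 3Δ⁻α_i) Δ⁻f_i Δ⁻g_i + (1/4) α_i α_{i+1} Δ⁺Δ⁺f_i Δ⁺Δ⁺g_i + (1/4) β_i β_{i-1} Δ⁻Δ⁻f_i Δ⁻Δ⁻g_i + (1/2) α_i β_i Δ⁺Δ⁻f_i Δ⁺Δ⁻g_i. -/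
import Mathlib


/-- Iterated carré du champ formula: `Γ₂^h(f,g)_i` equals the explicit expression
in terms of first and second differences of `f`, `g` and the coefficients. -/
theorem gamma_two_formula (α β : ℤ → ℝ) (f g : ℤ → ℝ) (i : ℤ)
    (L : (ℤ → ℝ) → ℤ → ℝ)
    (hL : ∀ (F : ℤ → ℝ) (j : ℤ), L F j = α j * (F (j+1) - F j) - β j * (F j - F (j-1)))
    (Γ : (ℤ → ℝ) → (ℤ → ℝ) → ℤ → ℝ)
    (hΓ : ∀ (F G : ℤ → ℝ) (j : ℤ), Γ F G j
      = (1/2) * α j * (F (j+1) - F j) * (G (j+1) - G j)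
        + (1/2) * β j * (F j - F (j-1)) * (G j - G (j-1))) :
    (1/2 : ℝ) * (L (Γ f g) i - Γ f (L g) i - Γ (L f) g i)
      = (1/4) * α i * (3 * (β (i+1) - β i) - (α (i+1) - α i)) * (f (i+1) - f i) * (g (i+1) - g i)
        + (1/4) * β i * ((β i - β (i-1)) - 3 * (α i - α (i-1))) * (f i - f (i-1)) * (g i - g (i-1))
        + (1/4) * α i * α (i+1) * ((f (i+2) - f (i+1)) - (f (i+1) - f i))
            * ((g (i+2) - g (i+1)) - (g (i+1) - g i))
        + (1/4) * β i * β (i-1) * ((f (i-1) - f (i-2)) - (f i - f (i-1)))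
            * ((g (i-1) - g (i-2)) - (g i - g (i-1)))
        + (1/2) * α i * β i * ((f (i+1) - f i) - (f i - f (i-1)))
            * ((g (i+1) - g i) - (g i - g (i-1))) := by
  simp only [hL, hΓ, show i+1-1=i from by ring, show i-1+1=i from by ring,
    show i+1+1=i+2 from by ring, show i-1-1=i-2 from by ring]
  ring
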